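/- For every natural number N ≥ 1, the Shannon entropy in bits of the distribution p on {0,1}^N given by p(a) = (1 + (−1)^{|a|}/√2)/2^N equals N + 1/2 − log₂(1+√2)/√2; equivalently, N − 1 + H_bin((1 − 1/√2)/2) = N + 1/2 − log₂(1+√2)/√2. (This is the amount of global randomness, approximately N − 0.4 bits, generated on the all-zeros inputs by the strategy achieving maximum quantum violation of the MABK inequality for even N.) -/

import Mathlib

open Real

/-- The number of ones in an `N`-bit string. -/
def hammingWeight {N : ℕ} (a : Fin N → Bool) : ℕ :=
  (Finset.univ.filter fun i => a i = true).card

/-- The binary entropy function in bits, with `H_bin(0) = H_bin(1) = 0`. -/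
noncomputable def Hbin (x : ℝ) : ℝ :=
  -(x * Real.logb 2 x) - (1 - x) * Real.logb 2 (1 - x)

/-- The distribution on the all-zeros inputs of the strategy maximally violating the
MABK inequality for even `N`: `p(a) = (1 + (−1)^{|a|}/√2)/2^N`. -/
noncomputable def mabkMaxDist (N : ℕ) : (Fin N → Bool) → ℝ := fun a =>
  (1 + (-1 : ℝ) ^ hammingWeight a / Real.sqrt 2) / 2 ^ N

lemma hammingWeight_cons {N : ℕ} (b : Bool) (a : Fin N → Bool) :
    hammingWeight (Fin.cons b a) = (if b then 1 else 0) + hammingWeight a := by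
  simp only [hammingWeight, Finset.card_filter]
  rw [Fin.sum_univ_succ]
  simp

lemma mabk_sign_sum : ∀ (M : ℕ), ∑ a : Fin (M + 1) → Bool, ((-1 : ℝ)) ^ hammingWeight a = 0 := by
  intro M
  rw [← Equiv.sum_comp (Fin.consEquiv fun _ => Bool)
    (fun a => ((-1 : ℝ)) ^ hammingWeight a)]
  rw [Fintype.sum_prod_type]
  have : ∀ p : Bool × (Fin M → Bool),
      ((Fin.consEquiv fun _ => Bool) p) = Fin.cons p.1 p.2 := fun _ => rfl
  simp only [this, hammingWeight_cons, pow_add, Fintype.sum_bool]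
  rw [← Finset.sum_add_distrib]
  simp

/-- The Shannon entropy in bits of `p(a) = (1 + (−1)^{|a|}/√2)/2^N` equals
`N + 1/2 − log₂(1+√2)/√2 ≈ N − 0.4`; equivalently,
`N − 1 + H_bin((1 − 1/√2)/2) = N + 1/2 − log₂(1+√2)/√2`. -/
theorem mabkMaxDist_entropy (N : ℕ) (hN : 1 ≤ N) :
    (∑ a : Fin N → Bool, -(mabkMaxDist N a * Real.logb 2 (mabkMaxDist N a))
      = (N : ℝ) + 1 / 2 - Real.logb 2 (1 + Real.sqrt 2) / Real.sqrt 2)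
    ∧ ((N : ℝ) - 1 + Hbin ((1 - 1 / Real.sqrt 2) / 2)
      = (N : ℝ) + 1 / 2 - Real.logb 2 (1 + Real.sqrt 2) / Real.sqrt 2) := by
  have hs2 : Real.sqrt 2 * Real.sqrt 2 = 2 := Real.mul_self_sqrt (by norm_num)
  have hspos : 0 < Real.sqrt 2 := Real.sqrt_pos.2 (by norm_num)
  have hsgt : 1 < Real.sqrt 2 := by nlinarith
  have hsne : Real.sqrt 2 ≠ 0 := ne_of_gt hspos
  set L : ℝ := Real.logb 2 (1 + Real.sqrt 2) with hLdef
  have hlogsqrt : Real.logb 2 (Real.sqrt 2) = 1 / 2 := by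
    rw [show Real.sqrt 2 = (2 : ℝ) ^ ((1 : ℝ) / 2) by
      rw [Real.sqrt_eq_rpow], Real.logb_rpow (by norm_num) (by norm_num)]
  have hone_add_ne : (1 : ℝ) + Real.sqrt 2 ≠ 0 := by positivity
  have hL1 : Real.logb 2 (1 + 1 / Real.sqrt 2) = L - 1 / 2 := by
    have h : (1 : ℝ) + 1 / Real.sqrt 2 = (1 + Real.sqrt 2) / Real.sqrt 2 := by
      rw [add_div, div_self hsne]; ring
    rw [h, Real.logb_div hone_add_ne hsne, hlogsqrt]
  have hL2 : Real.logb 2 (1 - 1 / Real.sqrt 2) = -L - 1 / 2 := by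
    have h : (1 : ℝ) - 1 / Real.sqrt 2 = (1 + Real.sqrt 2)⁻¹ / Real.sqrt 2 := by
      field_simp
      linear_combination hs2
    rw [h, Real.logb_div (by positivity) hsne, Real.logb_inv, hlogsqrt]
  have hfrac_pos : (0 : ℝ) < 1 - 1 / Real.sqrt 2 := by
    rw [sub_pos, div_lt_one hspos]; exact hsgt
  have hfrac_pos' : (0 : ℝ) < 1 + 1 / Real.sqrt 2 := by positivity
  constructor
  · -- entropy computation
    obtain ⟨M, rfl⟩ : ∃ M, N = M + 1 := ⟨N - 1, by omega⟩
    have h2N : ((2 : ℝ) ^ (M + 1)) ≠ 0 := by positivity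
    have hlog2N : Real.logb 2 ((2 : ℝ) ^ (M + 1)) = (M + 1 : ℝ) := by
      rw [Real.logb_pow, Real.logb_self_eq_one (by norm_num)]
      push_cast; ring
    set cp : ℝ := -((1 + 1 / Real.sqrt 2) / 2 ^ (M + 1) *
      Real.logb 2 ((1 + 1 / Real.sqrt 2) / 2 ^ (M + 1))) with hcp
    set cm : ℝ := -((1 - 1 / Real.sqrt 2) / 2 ^ (M + 1) *
      Real.logb 2 ((1 - 1 / Real.sqrt 2) / 2 ^ (M + 1))) with hcm
    have hterm : ∀ a : Fin (M + 1) → Bool,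
        -(mabkMaxDist (M + 1) a * Real.logb 2 (mabkMaxDist (M + 1) a))
        = (cp + cm) / 2 + ((-1 : ℝ)) ^ hammingWeight a * ((cp - cm) / 2) := by
      intro a
      rcases Nat.even_or_odd (hammingWeight a) with h | h
      · simp only [mabkMaxDist, h.neg_one_pow]
        rw [show ((1 : ℝ) + 1 / Real.sqrt 2) = 1 + 1 / Real.sqrt 2 from rfl]
        rw [hcp, hcm]
        ring
      · simp only [mabkMaxDist, h.neg_one_pow]
        rw [show ((1 : ℝ) + -1 / Real.sqrt 2) = 1 - 1 / Real.sqrt 2 by ring]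
        rw [hcp, hcm]
        ring
    rw [Finset.sum_congr rfl (fun a _ => hterm a)]
    rw [Finset.sum_add_distrib, Finset.sum_const, ← Finset.sum_mul, mabk_sign_sum M,
      zero_mul, add_zero]
    have hcard : (Finset.univ : Finset (Fin (M + 1) → Bool)).card = 2 ^ (M + 1) := by
      simp [Finset.card_univ]
    rw [hcard, nsmul_eq_mul]
    rw [hcp, hcm, Real.logb_div (ne_of_gt hfrac_pos') h2N,
      Real.logb_div (ne_of_gt hfrac_pos) h2N, hlog2N, hL1, hL2]
    push_cast
    field_simp
    ring
  · -- binary entropy identity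
    have hx : Real.logb 2 ((1 - 1 / Real.sqrt 2) / 2) = -L - 3 / 2 := by
      rw [Real.logb_div (ne_of_gt hfrac_pos) (by norm_num),
        Real.logb_self_eq_one (by norm_num), hL2]; ring
    have h1x : (1 : ℝ) - (1 - 1 / Real.sqrt 2) / 2 = (1 + 1 / Real.sqrt 2) / 2 := by
      ring
    have hy : Real.logb 2 ((1 + 1 / Real.sqrt 2) / 2) = L - 3 / 2 := by
      rw [Real.logb_div (ne_of_gt hfrac_pos') (by norm_num),
        Real.logb_self_eq_one (by norm_num), hL1]; ring
    rw [Hbin, h1x, hx, hy]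
    field_simp
    ring
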